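/- Let F be a field, n ≥ 2 and 1 ≤ m ≤ n−1. Let Y be any (n−m)×m matrix over F and let r be the rank of Y (so 0 ≤ r ≤ min(m, n−m)). Then there exist A ∈ GL_m(F) and C ∈ GL_{n−m}(F) with det A · det C = 1, and an element d ∈ F^×, such that C Y A^{-1} = Y_r(d). (For r = 0 this means C Y A^{-1} = 0, i.e. Y = 0.) -/

import Mathlib

/-- The `(n−m)×m` matrix `Y_r(d)`: its only nonzero entries are on the anti-diagonal of
its top-right `r×r` block; in 1-indexed notation, `Y_r(d)_{i, m+1−i} = 1` for
`1 ≤ i ≤ r−1` and `Y_r(d)_{r, m+1−r} = d`. -/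
def Ymat (F : Type*) [Field F] (n m r : ℕ) (d : F) : Matrix (Fin (n - m)) (Fin m) F :=
  fun i j =>
    if (i : ℕ) < r ∧ (j : ℕ) + (i : ℕ) + 1 = m then
      (if (i : ℕ) = r - 1 then d else 1)
    else 0

theorem levi_aux (F : Type*) [Field F] (n m : ℕ)
    (h1 : 1 ≤ m) (h2 : m ≤ n - 1) (hn : 2 ≤ n)
    (Y : Matrix (Fin (n - m)) (Fin m) F) :
    ∃ (U : Matrix (Fin (n - m)) (Fin (n - m)) F) (V : Matrix (Fin m) (Fin m) F),
      IsUnit U ∧ IsUnit V ∧ U * Ymat F n m Y.rank 1 * V = Y := by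
  have hnm : 1 ≤ n - m := by omega
  set r : ℕ := Y.rank with hrdef
  have hrm : r ≤ m := Y.rank_le_width
  have hrh : r ≤ n - m := Y.rank_le_height
  set f : (Fin m → F) →ₗ[F] (Fin (n - m) → F) := Y.mulVecLin with hfdef
  have hR : Module.finrank F (LinearMap.range f) = r := rfl
  have hK : Module.finrank F (LinearMap.ker f) = m - r := by
    have h := LinearMap.finrank_range_add_finrank_ker f
    rw [hR, Module.finrank_fin_fun] at h
    omega
  obtain ⟨V, hKV⟩ := Submodule.exists_isCompl (LinearMap.ker f)
  obtain ⟨W, hRW⟩ := Submodule.exists_isCompl (LinearMap.range f)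
  have hW : Module.finrank F W = (n - m) - r := by
    have h := Submodule.finrank_add_eq_of_isCompl hRW
    rw [hR, Module.finrank_fin_fun] at h
    omega
  let bR : Module.Basis (Fin r) F (LinearMap.range f) := Module.finBasisOfFinrankEq F _ hR
  let bK : Module.Basis (Fin (m - r)) F (LinearMap.ker f) := Module.finBasisOfFinrankEq F _ hK
  let bW : Module.Basis (Fin (n - m - r)) F W := Module.finBasisOfFinrankEq F _ hW
  -- the restriction of f to V is an iso onto the range
  let fV : V →ₗ[F] LinearMap.range f := f.rangeRestrict.comp V.subtype
  have hfV : Function.Bijective fV := by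
    constructor
    · rw [injective_iff_map_eq_zero]
      intro v hv
      have hvk : (v : Fin m → F) ∈ LinearMap.ker f := by
        simpa [fV, LinearMap.rangeRestrict, Subtype.ext_iff] using hv
      have := hKV.disjoint
      rw [Submodule.disjoint_def] at this
      exact Subtype.ext (this v hvk v.2)
    · rintro ⟨y, x, rfl⟩
      have hx : x ∈ (LinearMap.ker f) ⊔ V := by rw [hKV.sup_eq_top]; trivial
      obtain ⟨k, hk, v, hv, rfl⟩ := Submodule.mem_sup.1 hx
      refine ⟨⟨v, hv⟩, ?_⟩
      apply Subtype.ext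
      simp only [fV, LinearMap.comp_apply, Submodule.coe_subtype, LinearMap.rangeRestrict,
        LinearMap.codRestrict_apply]
      rw [map_add, LinearMap.mem_ker.1 hk, zero_add]
  let e : V ≃ₗ[F] LinearMap.range f := LinearEquiv.ofBijective fV hfV
  -- adapted bases, indexed by sum types
  let b0 : Module.Basis (Fin (m - r) ⊕ Fin r) F (Fin m → F) :=
    (bK.prod (bR.map e.symm)).map (Submodule.prodEquivOfIsCompl _ V hKV)
  let c0 : Module.Basis (Fin r ⊕ Fin (n - m - r)) F (Fin (n - m) → F) :=
    (bR.prod bW).map (Submodule.prodEquivOfIsCompl _ W hRW)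
  have hb_inl : ∀ k, f (b0 (Sum.inl k)) = 0 := by
    intro k
    have : b0 (Sum.inl k) = (bK k : Fin m → F) := by
      simp [b0, Submodule.coe_prodEquivOfIsCompl']
    rw [this]
    exact LinearMap.mem_ker.1 (bK k).2
  have hb_inr : ∀ i, f (b0 (Sum.inr i)) = c0 (Sum.inl i) := by
    intro i
    have h1' : b0 (Sum.inr i) = ((e.symm (bR i) : V) : Fin m → F) := by
      simp [b0, Submodule.coe_prodEquivOfIsCompl']
    have h2' : c0 (Sum.inl i) = (bR i : Fin (n - m) → F) := by
      simp [c0, Submodule.coe_prodEquivOfIsCompl']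
    rw [h1', h2']
    have : f ((e.symm (bR i) : V) : Fin m → F) = (fV (e.symm (bR i)) : Fin (n - m) → F) := rfl
    rw [this]
    have : fV (e.symm (bR i)) = e (e.symm (bR i)) := rfl
    rw [this, e.apply_symm_apply]
  -- reindexing equivalences
  let σ : (Fin (m - r) ⊕ Fin r) ≃ Fin m :=
    ((Equiv.refl (Fin (m - r))).sumCongr (Fin.revPerm)).trans
      (finSumFinEquiv.trans (finCongr (by omega)))
  let τ : (Fin r ⊕ Fin (n - m - r)) ≃ Fin (n - m) :=
    finSumFinEquiv.trans (finCongr (by omega))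
  have hσl : ∀ k : Fin (m - r), ((σ (Sum.inl k) : Fin m) : ℕ) = (k : ℕ) := by
    intro k; simp [σ]
  have hσr : ∀ i : Fin r, ((σ (Sum.inr i) : Fin m) : ℕ) = (m - r) + (r - (i + 1)) := by
    intro i; simp [σ]
  have hτl : ∀ i : Fin r, ((τ (Sum.inl i) : Fin (n - m)) : ℕ) = (i : ℕ) := by
    intro i; simp [τ]
  have hτr : ∀ k : Fin (n - m - r), ((τ (Sum.inr k) : Fin (n - m)) : ℕ) = r + (k : ℕ) := by
    intro k; simp [τ]
  let b : Module.Basis (Fin m) F (Fin m → F) := b0.reindex σ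
  let c : Module.Basis (Fin (n - m)) F (Fin (n - m) → F) := c0.reindex τ
  have hE : LinearMap.toMatrix b c f = Ymat F n m r 1 := by
    ext p q
    obtain ⟨x, rfl⟩ := τ.surjective p
    obtain ⟨y, rfl⟩ := σ.surjective q
    rw [LinearMap.toMatrix_apply]
    have hb' : b (σ y) = b0 y := by simp [b]
    have hc' : ∀ z, c.repr z (τ x) = c0.repr z x := by
      intro z; simp [c]
    rw [hb', hc']
    rcases y with k | i
    · rw [hb_inl k, map_zero]
      have hcond : ¬(((τ x : Fin (n - m)) : ℕ) < r ∧
          ((σ (Sum.inl k) : Fin m) : ℕ) + ((τ x : Fin (n - m)) : ℕ) + 1 = m) := by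
        rw [hσl]
        rintro ⟨hlt, heq⟩
        have := k.2
        omega
      simp [Ymat, hcond]
    · rw [hb_inr i, Module.Basis.repr_self]
      rcases x with i' | k'
      · have hval : ((σ (Sum.inr i) : Fin m) : ℕ) + ((τ (Sum.inl i') : Fin (n - m)) : ℕ) + 1 = m
            ↔ (i' : ℕ) = (i : ℕ) := by
          rw [hσr, hτl]
          have := i.2; have := i'.2
          omega
        by_cases h : i' = i
        · subst h
          have hcond : ((τ (Sum.inl i') : Fin (n - m)) : ℕ) < r ∧
              ((σ (Sum.inr i') : Fin m) : ℕ) + ((τ (Sum.inl i') : Fin (n - m)) : ℕ) + 1 = m := by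
            refine ⟨?_, hval.2 rfl⟩
            rw [hτl]; exact i'.2
          simp [Ymat, hcond, Finsupp.single_apply]
        · have hne : ¬((i' : ℕ) = (i : ℕ)) := fun hh => h (Fin.ext hh)
          have hcond : ¬(((τ (Sum.inl i') : Fin (n - m)) : ℕ) < r ∧
              ((σ (Sum.inr i) : Fin m) : ℕ) + ((τ (Sum.inl i') : Fin (n - m)) : ℕ) + 1 = m) := by
            rintro ⟨-, heq⟩; exact hne (hval.1 heq)
          have hne' : Sum.inl i ≠ (Sum.inl i' : Fin r ⊕ Fin (n - m - r)) := by
            simpa using fun hh => h (hh.symm)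
          simp [Ymat, hcond, Finsupp.single_apply, hne']
      · have hcond : ¬(((τ (Sum.inr k') : Fin (n - m)) : ℕ) < r ∧
            ((σ (Sum.inr i) : Fin m) : ℕ) + ((τ (Sum.inr k') : Fin (n - m)) : ℕ) + 1 = m) := by
          rw [hτr]; rintro ⟨hlt, -⟩; omega
        simp [Ymat, hcond, Finsupp.single_apply]
  -- base change
  let piB := Pi.basisFun F (Fin m)
  let piC := Pi.basisFun F (Fin (n - m))
  have key : piC.toMatrix ⇑c * LinearMap.toMatrix b c f * b.toMatrix ⇑piB
      = LinearMap.toMatrix piB piC f :=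
    basis_toMatrix_mul_linearMap_toMatrix_mul_basis_toMatrix piB b piC c f
  have hYf : LinearMap.toMatrix piB piC f = Y := by
    rw [show (LinearMap.toMatrix piB piC : _ ≃ₗ[F] _) = LinearMap.toMatrix' from rfl]
    rw [hfdef, ← Matrix.toLin'_apply', LinearMap.toMatrix'_toLin']
  set U : Matrix (Fin (n - m)) (Fin (n - m)) F := piC.toMatrix ⇑c with hUdef
  set Vm : Matrix (Fin m) (Fin m) F := b.toMatrix ⇑piB with hVdef
  have hfact : U * Ymat F n m r 1 * Vm = Y := by rw [← hE, key, hYf]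
  haveI : Invertible U := piC.invertibleToMatrix c
  haveI : Invertible Vm := b.invertibleToMatrix piB
  exact ⟨U, Vm, isUnit_of_invertible U, isUnit_of_invertible Vm, hfact⟩

/-- Normal form for the Levi action: any `(n−m)×m` matrix `Y` over a field `F` of rank `r`
can be brought to the form `Y_r(d)` for some `d ∈ F^×` by `Y ↦ C Y A⁻¹` with
`A ∈ GL_m(F)`, `C ∈ GL_{n−m}(F)` and `det A · det C = 1`. -/
theorem levi_normal_form (F : Type*) [Field F] (n m : ℕ)
    (h1 : 1 ≤ m) (h2 : m ≤ n - 1) (hn : 2 ≤ n)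
    (Y : Matrix (Fin (n - m)) (Fin m) F) :
    ∃ (A : Matrix.GeneralLinearGroup (Fin m) F)
      (C : Matrix.GeneralLinearGroup (Fin (n - m)) F) (d : F),
      d ≠ 0 ∧
      A.val.det * C.val.det = 1 ∧
      C.val * Y * (A⁻¹).val = Ymat F n m Y.rank d := by
  have hnm : 1 ≤ n - m := by omega
  have hrh : Y.rank ≤ n - m := Y.rank_le_height
  set r : ℕ := Y.rank with hrdef
  obtain ⟨U, V, hU, hV, hfact⟩ := levi_aux F n m h1 h2 hn Y
  obtain ⟨Uu, rfl⟩ := hU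
  obtain ⟨Vu, rfl⟩ := hV
  set s : F := Vu.val.det * (Uu⁻¹).val.det with hsdef
  have hVdet : Vu.val.det ≠ 0 :=
    ((Matrix.isUnit_iff_isUnit_det _).1 Vu.isUnit).ne_zero
  have hUinvdet : (Uu⁻¹).val.det ≠ 0 :=
    ((Matrix.isUnit_iff_isUnit_det _).1 (Uu⁻¹).isUnit).ne_zero
  have hs : s ≠ 0 := mul_ne_zero hVdet hUinvdet
  have hd : s⁻¹ ≠ 0 := inv_ne_zero hs
  let i₀ : Fin (n - m) := ⟨r - 1, by omega⟩
  set D : Matrix (Fin (n - m)) (Fin (n - m)) F :=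
    Matrix.diagonal (fun i => if i = i₀ then s⁻¹ else 1) with hDdef
  have hDdet : D.det = s⁻¹ := by
    rw [hDdef, Matrix.det_diagonal, Finset.prod_ite_eq' Finset.univ i₀]
    simp
  haveI : Invertible D.det := by rw [hDdet]; exact invertibleOfNonzero hd
  haveI : Invertible D := D.invertibleOfDetInvertible
  have hDY : D * Ymat F n m r 1 = Ymat F n m r s⁻¹ := by
    ext i j
    rw [hDdef, Matrix.diagonal_mul]
    by_cases hc : (i : ℕ) < r ∧ (j : ℕ) + (i : ℕ) + 1 = m
    · have h10 : Ymat F n m r 1 i j = 1 := by simp [Ymat, hc]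
      have hd0 : Ymat F n m r s⁻¹ i j = if (i : ℕ) = r - 1 then s⁻¹ else 1 := by
        simp [Ymat, hc]
      rw [h10, hd0, mul_one]
      have hiff : i = i₀ ↔ (i : ℕ) = r - 1 := by rw [Fin.ext_iff]
      by_cases h : (i : ℕ) = r - 1 <;> simp [hiff, h]
    · have h10 : Ymat F n m r 1 i j = 0 := by simp [Ymat, hc]
      have hd0 : Ymat F n m r s⁻¹ i j = 0 := by simp [Ymat, hc]
      rw [h10, hd0, mul_zero]
  refine ⟨Vu, unitOfInvertible D * Uu⁻¹, s⁻¹, hd, ?_, ?_⟩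
  · show Vu.val.det * (D * (Uu⁻¹).val).det = 1
    rw [Matrix.det_mul, hDdet]
    have : Vu.val.det * (s⁻¹ * (Uu⁻¹).val.det) = s⁻¹ * s := by
      rw [hsdef]; ring
    rw [this, inv_mul_cancel₀ hs]
  · show (D * (Uu⁻¹).val) * Y * (Vu⁻¹).val = Ymat F n m r s⁻¹
    rw [← hfact]
    calc (D * (Uu⁻¹).val) * (Uu.val * Ymat F n m r 1 * Vu.val) * (Vu⁻¹).val
        = D * (((Uu⁻¹).val * Uu.val) * Ymat F n m r 1) * (Vu.val * (Vu⁻¹).val) := by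
          simp only [Matrix.mul_assoc]
      _ = D * Ymat F n m r 1 := by
          rw [Uu.inv_mul, Vu.mul_inv, Matrix.one_mul, Matrix.mul_one]
      _ = Ymat F n m r s⁻¹ := hDY
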